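/- Let ν¹ = ν*¹ + iν̃¹ and ν² = ν*² + iν̃² be complex eigenvectors of B = Aᵀ with eigenvalues λ₁ = λ₁* + iλ̃₁ and λ₂ = λ₂* + iλ̃₂ satisfying λ₁*λ̃₂ = λ₂*λ̃₁ (so that λ̃₁, λ̃₂ combine to cancel). Then F(x) = λ̃₁ · arctan((ν̃²·x)/(ν*²·x)) − λ̃₂ · arctan((ν̃¹·x)/(ν*¹·x)) is an autonomous first integral of dx/dt = Ax on any open set where ν*¹·x ≠ 0, ν*²·x ≠ 0, provided λ₁* = λ₂* = 0 or more generally the real parts of λ̃₁λ₂ − λ̃₂λ₁ vanish. -/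

import Mathlib

open Matrix

noncomputable def dotCLM {n : ℕ} (v : Fin n → ℝ) : (Fin n → ℝ) →L[ℝ] ℝ :=
  LinearMap.toContinuousLinearMap
    { toFun := fun y => v ⬝ᵥ y
      map_add' := fun a b => by simp [dotProduct_add]
      map_smul' := fun c a => by simp [dotProduct_smul] }

lemma dotCLM_apply {n : ℕ} (v y : Fin n → ℝ) : dotCLM v y = v ⬝ᵥ y := rfl

lemma hasFDerivAt_dot {n : ℕ} (v x : Fin n → ℝ) :
    HasFDerivAt (fun y => v ⬝ᵥ y) (dotCLM v) x :=
  (dotCLM v).hasFDerivAt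

lemma hasFDerivAt_quot {n : ℕ} (νt νs x : Fin n → ℝ) (h : νs ⬝ᵥ x ≠ 0) :
    HasFDerivAt (fun y => (νt ⬝ᵥ y) * (νs ⬝ᵥ y)⁻¹)
      ((νt ⬝ᵥ x) • ((-(ContinuousLinearMap.mulLeftRight ℝ ℝ (νs ⬝ᵥ x)⁻¹ (νs ⬝ᵥ x)⁻¹)).comp
          (dotCLM νs)) + (νs ⬝ᵥ x)⁻¹ • dotCLM νt) x := by
  exact (hasFDerivAt_dot νt x).mul ((hasFDerivAt_inv' h).comp x (hasFDerivAt_dot νs x))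

lemma real_eigen {n : ℕ} (A : Matrix (Fin n) (Fin n) ℝ) (νs νt : Fin n → ℝ) (ls lt : ℝ)
    (h : (A.map Complex.ofReal)ᵀ.mulVec (fun i => (νs i : ℂ) + νt i * Complex.I)
      = ((ls:ℂ) + lt * Complex.I) • (fun i => (νs i:ℂ) + νt i * Complex.I)) (x : Fin n → ℝ) :
    νs ⬝ᵥ A.mulVec x = ls * (νs ⬝ᵥ x) - lt * (νt ⬝ᵥ x) ∧
    νt ⬝ᵥ A.mulVec x = lt * (νs ⬝ᵥ x) + ls * (νt ⬝ᵥ x) := by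
  have hs : Aᵀ.mulVec νs = ls • νs - lt • νt := by
    funext i
    have := congrFun h i
    simp [Matrix.mulVec, dotProduct, Complex.ext_iff, Complex.re_sum, Complex.im_sum] at this
    simp [Matrix.mulVec, dotProduct]
    linarith [this.1]
  have ht : Aᵀ.mulVec νt = lt • νs + ls • νt := by
    funext i
    have := congrFun h i
    simp [Matrix.mulVec, dotProduct, Complex.ext_iff, Complex.re_sum, Complex.im_sum] at this
    simp [Matrix.mulVec, dotProduct]
    linarith [this.2]
  constructor
  · rw [Matrix.dotProduct_mulVec, ← Matrix.mulVec_transpose, hs]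
    simp [sub_dotProduct, smul_dotProduct, smul_eq_mul]
  · rw [Matrix.dotProduct_mulVec, ← Matrix.mulVec_transpose, ht]
    simp [add_dotProduct, smul_dotProduct, smul_eq_mul]

/-- Theorem 1.4: for complex eigenvectors `ν¹, ν²` of `Aᵀ` with eigenvalues
`λ₁ = λ₁* + iλ̃₁`, `λ₂ = λ₂* + iλ̃₂` satisfying `λ₁*λ̃₂ = λ₂*λ̃₁`, the function
`F(x) = λ̃₁·arctan((ν̃²·x)/(ν*²·x)) − λ̃₂·arctan((ν̃¹·x)/(ν*¹·x))` is an autonomous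
first integral of `dx/dt = Ax` wherever `ν*¹·x ≠ 0` and `ν*²·x ≠ 0`. -/
theorem first_integral_two_complex_eigenvectors
    (n : ℕ) (A : Matrix (Fin n) (Fin n) ℝ)
    (νs₁ νt₁ νs₂ νt₂ : Fin n → ℝ) (lams₁ lamt₁ lams₂ lamt₂ : ℝ)
    (hν₁ : (fun i => (νs₁ i : ℂ) + νt₁ i * Complex.I) ≠ (0 : Fin n → ℂ))
    (hν₂ : (fun i => (νs₂ i : ℂ) + νt₂ i * Complex.I) ≠ (0 : Fin n → ℂ))
    (heig₁ : (A.map Complex.ofReal)ᵀ.mulVec (fun i => (νs₁ i : ℂ) + νt₁ i * Complex.I)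
      = ((lams₁ : ℂ) + lamt₁ * Complex.I) • (fun i => (νs₁ i : ℂ) + νt₁ i * Complex.I))
    (heig₂ : (A.map Complex.ofReal)ᵀ.mulVec (fun i => (νs₂ i : ℂ) + νt₂ i * Complex.I)
      = ((lams₂ : ℂ) + lamt₂ * Complex.I) • (fun i => (νs₂ i : ℂ) + νt₂ i * Complex.I))
    (hre : lams₁ * lamt₂ = lams₂ * lamt₁) :
    ∀ x : Fin n → ℝ, νs₁ ⬝ᵥ x ≠ 0 → νs₂ ⬝ᵥ x ≠ 0 →
      fderiv ℝ (fun y => lamt₁ * Real.arctan ((νt₂ ⬝ᵥ y) / (νs₂ ⬝ᵥ y))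
          - lamt₂ * Real.arctan ((νt₁ ⬝ᵥ y) / (νs₁ ⬝ᵥ y)))
        x (A.mulVec x) = 0 := by
  intro x h1 h2
  simp only [div_eq_mul_inv]
  have a1 := (Real.hasDerivAt_arctan ((νt₁ ⬝ᵥ x) * (νs₁ ⬝ᵥ x)⁻¹)).comp_hasFDerivAt x
    (hasFDerivAt_quot νt₁ νs₁ x h1)
  have a2 := (Real.hasDerivAt_arctan ((νt₂ ⬝ᵥ x) * (νs₂ ⬝ᵥ x)⁻¹)).comp_hasFDerivAt x
    (hasFDerivAt_quot νt₂ νs₂ x h2)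
  have HF := (a2.const_mul lamt₁).sub (a1.const_mul lamt₂)
  simp only [Function.comp_def, Pi.sub_def] at HF
  rw [HF.fderiv]
  have e1 := real_eigen A νs₁ νt₁ lams₁ lamt₁ heig₁ x
  have e2 := real_eigen A νs₂ νt₂ lams₂ lamt₂ heig₂ x
  simp only [ContinuousLinearMap.smul_apply, ContinuousLinearMap.sub_apply,
    ContinuousLinearMap.add_apply, ContinuousLinearMap.comp_apply,
    ContinuousLinearMap.neg_apply, ContinuousLinearMap.mulLeftRight_apply,
    dotCLM_apply, smul_eq_mul, e1.1, e1.2, e2.1, e2.2, Function.comp]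
  field_simp
  ring
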